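/- Let V₊, V₋ ∈ ℂ, α ∈ ℂ, and z ∈ ℂ with V₊ − z ∉ (−∞,0] and V₋ − z ∉ (−∞,0]. If √(V₊ − z) + √(V₋ − z) = −α, then α ≠ 0, √(V₊ − z) − √(V₋ − z) = −(V₊ − V₋)/α, and z = (V₊ + V₋)/2 − (V₊ − V₋)²/(4α²) − α²/4. (Hence any eigenvalue of the complex point interaction operator 𝓛_α outside the rays [V₊,+∞) ∪ [V₋,+∞) necessarily equals z(α).) -/

import Mathlib

/-- The principal branch of the complex square root,
holomorphic on `ℂ ∖ (−∞,0]` and positive on `(0,+∞)`. -/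
noncomputable def csqrt (z : ℂ) : ℂ := z ^ (1 / 2 : ℂ)

lemma csqrt_sq (w : ℂ) (hw : w ≠ 0) : csqrt w ^ 2 = w := by
  rw [csqrt, sq, ← Complex.cpow_add _ _ hw]
  norm_num

/-- If `z` lies off the rays `[V₊,+∞) ∪ [V₋,+∞)` and `√(V₊ − z) + √(V₋ − z) = −α`, then
`α ≠ 0`, `√(V₊ − z) − √(V₋ − z) = −(V₊ − V₋)/α`, and
`z = (V₊ + V₋)/2 − (V₊ − V₋)²/(4α²) − α²/4`. -/
theorem stmt15 (Vp Vm α z : ℂ)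
    (hp : ∀ t : ℝ, t ≤ 0 → Vp - z ≠ (t : ℂ))
    (hm : ∀ t : ℝ, t ≤ 0 → Vm - z ≠ (t : ℂ))
    (h : csqrt (Vp - z) + csqrt (Vm - z) = -α) :
    α ≠ 0 ∧
    csqrt (Vp - z) - csqrt (Vm - z) = -((Vp - Vm) / α) ∧
    z = (Vp + Vm) / 2 - (Vp - Vm) ^ 2 / (4 * α ^ 2) - α ^ 2 / 4 := by
  have hp0 : Vp - z ≠ 0 := by simpa using hp 0 le_rfl
  have hm0 : Vm - z ≠ 0 := by simpa using hm 0 le_rfl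
  have ha : csqrt (Vp - z) ^ 2 = Vp - z := csqrt_sq _ hp0
  have hb : csqrt (Vm - z) ^ 2 = Vm - z := csqrt_sq _ hm0
  set a := csqrt (Vp - z) with ha'
  set b := csqrt (Vm - z) with hb'
  have hα : α ≠ 0 := by
    intro h0
    rw [h0, neg_zero] at h
    have hab : a = -b := by linear_combination h
    have heq : Vp - z = Vm - z := by
      rw [← ha, ← hb, hab]; ring
    have hVV : Vp = Vm := by linear_combination heq
    rw [ha', hb', hVV] at hab
    have hb0 : b = 0 := by
      rw [hb']
      linear_combination (1/2 : ℂ) * hab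
    have : Vm - z = 0 := by rw [← hb, hb0]; ring
    exact hm0 this
  have hd : a - b = -((Vp - Vm) / α) := by
    have key : (a + b) * (a - b) = Vp - Vm := by
      linear_combination ha - hb
    field_simp
    linear_combination (a - b) * h - key
  refine ⟨hα, hd, ?_⟩
  have h2 : (a + b) ^ 2 + (a - b) ^ 2 = 2 * (Vp + Vm) - 4 * z := by
    linear_combination 2 * ha + 2 * hb
  rw [h, hd] at h2
  have h4 : α ^ 2 ≠ 0 := pow_ne_zero _ hα
  have h2' : α ^ 2 * α ^ 2 + (Vp - Vm) ^ 2 = (2 * (Vp + Vm) - 4 * z) * α ^ 2 := by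
    field_simp at h2
    linear_combination h2
  field_simp
  linear_combination 2 * h2'
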